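/- Let F be a J-frame for H with synthesis operator T and J-frame operator S = TT⁺. A Bessel family G = {g_i} with synthesis operator V satisfies the duality relations T P₊ V⁺ = Q and T P₋ V⁺ = I − Q (where Q = P_{M₊//M₋}) if and only if V = S⁻¹T + W for some bounded operator W : ℓ²(I) → H with N(T)^{[⊥]} ⊆ N(W). -/

import Mathlib

noncomputable section

open scoped Classical

open Function

/-- The indefinite inner product `[x,y] = ⟨Jx, y⟩` induced by an operator `J`. -/
def kre {E : Type*} [NormedAddCommGroup E] [InnerProductSpace ℂ E]
    (J : E →L[ℂ] E) (x y : E) : ℂ := @inner ℂ _ _ (J x) y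

/-- `J` is a fundamental symmetry: a selfadjoint unitary (involutive) operator. -/
def IsFundSym {E : Type*} [NormedAddCommGroup E] [InnerProductSpace ℂ E] [CompleteSpace E]
    (J : E →L[ℂ] E) : Prop :=
  IsSelfAdjoint J ∧ J.comp J = ContinuousLinearMap.id ℂ E

/-- The J-orthogonal companion of a subspace. -/
def JorthCompanion {E : Type*} [NormedAddCommGroup E] [InnerProductSpace ℂ E]
    (J : E →L[ℂ] E) (S : Submodule ℂ E) : Submodule ℂ E where
  carrier := {x | ∀ s ∈ S, kre J x s = 0}
  zero_mem' := by intro s hs; simp [kre]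
  add_mem' := by
    intro a b ha hb s hs
    have h1 := ha s hs
    have h2 := hb s hs
    simp only [kre, map_add, inner_add_left] at h1 h2 ⊢
    rw [h1, h2, add_zero]
  smul_mem' := by
    intro c x hx s hs
    have h1 := hx s hs
    simp only [kre, map_smul, inner_smul_left] at h1 ⊢
    rw [h1, mul_zero]

/-- Uniformly J-positive subspace. -/
def UnifJPos {E : Type*} [NormedAddCommGroup E] [InnerProductSpace ℂ E]
    (J : E →L[ℂ] E) (S : Submodule ℂ E) : Prop :=
  ∃ α : ℝ, 0 < α ∧ ∀ x ∈ S, α * ‖x‖ ^ 2 ≤ (kre J x x).re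

/-- Uniformly J-negative subspace. -/
def UnifJNeg {E : Type*} [NormedAddCommGroup E] [InnerProductSpace ℂ E]
    (J : E →L[ℂ] E) (S : Submodule ℂ E) : Prop :=
  ∃ α : ℝ, 0 < α ∧ ∀ x ∈ S, (kre J x x).re ≤ -(α * ‖x‖ ^ 2)

/-- Maximal uniformly J-positive subspace. -/
def MaxUnifJPos {E : Type*} [NormedAddCommGroup E] [InnerProductSpace ℂ E]
    (J : E →L[ℂ] E) (S : Submodule ℂ E) : Prop :=
  UnifJPos J S ∧ ∀ S' : Submodule ℂ E, UnifJPos J S' → S ≤ S' → S' = S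

/-- Maximal uniformly J-negative subspace. -/
def MaxUnifJNeg {E : Type*} [NormedAddCommGroup E] [InnerProductSpace ℂ E]
    (J : E →L[ℂ] E) (S : Submodule ℂ E) : Prop :=
  UnifJNeg J S ∧ ∀ S' : Submodule ℂ E, UnifJNeg J S' → S ≤ S' → S' = S

/-- J-selfadjoint operator (with respect to the indefinite inner product of `J`). -/
def IsJSelfAdj {E : Type*} [NormedAddCommGroup E] [InnerProductSpace ℂ E]
    (J : E →L[ℂ] E) (A : E →L[ℂ] E) : Prop :=
  ∀ x y : E, kre J (A x) y = kre J x (A y)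

/-- The J-order: `A ≤_J B` iff `B - A` is J-positive. -/
def JLe {E : Type*} [NormedAddCommGroup E] [InnerProductSpace ℂ E]
    (J : E →L[ℂ] E) (A B : E →L[ℂ] E) : Prop :=
  ∀ x : E, 0 ≤ (kre J (B x - A x) x).re ∧ (kre J (B x - A x) x).im = 0

/-- The subspace of `ℓ²(I)` supported on a subset (given by a predicate) of `I`. -/
def suppSub {I : Type*} (A : I → Prop) : Submodule ℂ (lp (fun _ : I => ℂ) 2) where
  carrier := {x | ∀ i, ¬ A i → x i = 0}
  zero_mem' := by intro i _; rfl
  add_mem' := by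
    intro a b ha hb i hi
    have : (↑(a + b) : ∀ i, ℂ) i = a i + b i := by
      rw [lp.coeFn_add]; rfl
    simp [this, ha i hi, hb i hi]
  smul_mem' := by
    intro c x hx i hi
    have : (↑(c • x) : ∀ i, ℂ) i = c • x i := by
      rw [lp.coeFn_smul]; rfl
    simp [this, hx i hi]

variable {H : Type*} [NormedAddCommGroup H] [InnerProductSpace ℂ H] [CompleteSpace H]
variable {I : Type*} [DecidableEq I]

/-- `i` is a "positive index" for the family `f` w.r.t. `J`: `[f i, f i] ≥ 0`. -/
def posIdx {H : Type*} [NormedAddCommGroup H] [InnerProductSpace ℂ H]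
    (J : H →L[ℂ] H) (f : I → H) (i : I) : Prop := 0 ≤ (kre J (f i) (f i)).re

/-- The sign `σ_i = sgn [f i, f i]` (as a complex scalar, `+1` on `I₊` and `-1` on `I₋`). -/
def sgnv {H : Type*} [NormedAddCommGroup H] [InnerProductSpace ℂ H]
    (J : H →L[ℂ] H) (f : I → H) (i : I) : ℂ := if posIdx J f i then 1 else -1

/-- Closure of the span of the vectors of the family `h` with positive indices (signs taken
from the family `f`). -/
def posSpan {H : Type*} [NormedAddCommGroup H] [InnerProductSpace ℂ H]
    (J : H →L[ℂ] H) (f h : I → H) : Submodule ℂ H :=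
  (Submodule.span ℂ {x | ∃ i, posIdx J f i ∧ h i = x}).topologicalClosure

/-- Closure of the span of the vectors of the family `h` with negative indices. -/
def negSpan {H : Type*} [NormedAddCommGroup H] [InnerProductSpace ℂ H]
    (J : H →L[ℂ] H) (f h : I → H) : Submodule ℂ H :=
  (Submodule.span ℂ {x | ∃ i, ¬ posIdx J f i ∧ h i = x}).topologicalClosure

/-- A Bessel family in a Hilbert space. -/
def IsBessel {H : Type*} [NormedAddCommGroup H] [InnerProductSpace ℂ H]
    (g : I → H) : Prop :=
  ∃ β : ℝ, ∀ (x : H) (s : Finset I),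
    ∑ i ∈ s, ‖@inner ℂ _ _ (g i) x‖ ^ 2 ≤ β * ‖x‖ ^ 2

/-- `g` is a dual family for `f`: the signs coincide and the two indefinite
reconstruction formulas hold. -/
def IsDualFamily {H : Type*} [NormedAddCommGroup H] [InnerProductSpace ℂ H]
    (J : H →L[ℂ] H) (f g : I → H) : Prop :=
  (∀ i, Real.sign ((kre J (g i) (g i)).re) = Real.sign ((kre J (f i) (f i)).re)) ∧
  (∀ x : H, HasSum (fun i => (sgnv J f i * kre J x (f i)) • g i) x) ∧
  (∀ x : H, HasSum (fun i => (sgnv J f i * kre J x (g i)) • f i) x)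


/-- A Bessel family `G` with synthesis operator `V` satisfies the duality
relations `TP₊V⁺ = Q`, `TP₋V⁺ = I - Q` iff `V = S⁻¹T + W` with `N(T)^[⊥] ⊆ N(W)`. -/
theorem dual_family_characterization
    (J : H →L[ℂ] H) (hJ : IsFundSym J) (f : I → H)
    (T : lp (fun _ : I => ℂ) 2 →L[ℂ] H)
    (hT : ∀ i, T (lp.single 2 i (1:ℂ)) = f i)
    (hTsurj : Function.Surjective T)
    (Pp Pm : lp (fun _ : I => ℂ) 2 →L[ℂ] lp (fun _ : I => ℂ) 2)
    (hPp : ∀ (x : lp (fun _ : I => ℂ) 2) (i : I), Pp x i = if posIdx J f i then x i else 0)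
    (hPm : ∀ (x : lp (fun _ : I => ℂ) 2) (i : I), Pm x i = if posIdx J f i then 0 else x i)
    (hJF : MaxUnifJPos J (LinearMap.range (T.comp Pp : lp (fun _ : I => ℂ) 2 →ₗ[ℂ] H)) ∧
      MaxUnifJNeg J (LinearMap.range (T.comp Pm : lp (fun _ : I => ℂ) 2 →ₗ[ℂ] H)))
    (Tp : H →L[ℂ] lp (fun _ : I => ℂ) 2)
    (hTp : ∀ (x : lp (fun _ : I => ℂ) 2) (y : H), kre J (T x) y = kre (Pp - Pm) x (Tp y))
    (Sinv : H →L[ℂ] H)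
    (hS1 : (T.comp Tp).comp Sinv = ContinuousLinearMap.id ℂ H)
    (hS2 : Sinv.comp (T.comp Tp) = ContinuousLinearMap.id ℂ H)
    (Q : H →L[ℂ] H) (hQidem : Q.comp Q = Q)
    (hQran : LinearMap.range (Q : H →ₗ[ℂ] H) = LinearMap.range (T.comp Pp : lp (fun _ : I => ℂ) 2 →ₗ[ℂ] H))
    (hQker : LinearMap.ker (Q : H →ₗ[ℂ] H) = LinearMap.range (T.comp Pm : lp (fun _ : I => ℂ) 2 →ₗ[ℂ] H))
    (g : I → H) (hBessel : IsBessel g)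
    (V : lp (fun _ : I => ℂ) 2 →L[ℂ] H)
    (hV : ∀ i, V (lp.single 2 i (1:ℂ)) = g i)
    (Vp : H →L[ℂ] lp (fun _ : I => ℂ) 2)
    (hVp : ∀ (x : lp (fun _ : I => ℂ) 2) (y : H), kre J (V x) y = kre (Pp - Pm) x (Vp y)) :
    (T.comp (Pp.comp Vp) = Q ∧
        T.comp (Pm.comp Vp) = ContinuousLinearMap.id ℂ H - Q) ↔
      ∃ W : lp (fun _ : I => ℂ) 2 →L[ℂ] H, V = Sinv.comp T + W ∧
        JorthCompanion (Pp - Pm) (LinearMap.ker (T : lp (fun _ : I => ℂ) 2 →ₗ[ℂ] H)) ≤ LinearMap.ker (W : lp (fun _ : I => ℂ) 2 →ₗ[ℂ] H) := by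
  classical
  set L2 := lp (fun _ : I => ℂ) 2
  set J2 : L2 →L[ℂ] L2 := Pp - Pm with hJ2def
  -- componentwise description of J2
  have hJ2comp : ∀ (x : L2) (i : I), (J2 x) i = if posIdx J f i then x i else - x i := by
    intro x i
    have h0 : J2 x = Pp x - Pm x := rfl
    have h2 : ((Pp x - Pm x : L2) : ∀ i, ℂ) i = Pp x i - Pm x i := by
      rw [lp.coeFn_sub]; rfl
    rw [h0, h2, hPp, hPm]
    split <;> simp
  -- J2 is an involution
  have hJ2inv : ∀ x : L2, J2 (J2 x) = x := by
    intro x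
    apply lp.ext
    funext i
    rw [hJ2comp, hJ2comp]
    split <;> simp
  -- J2 is selfadjoint
  have hJ2sa : ∀ x y : L2, inner ℂ (J2 x) y = inner ℂ x (J2 y) := by
    intro x y
    rw [lp.inner_eq_tsum, lp.inner_eq_tsum]
    apply tsum_congr
    intro i
    rw [hJ2comp, hJ2comp]
    split <;> simp [RCLike.inner_apply, map_neg, neg_mul, mul_neg]
  -- J is selfadjoint
  have hJsa : ∀ x y : H, inner ℂ (J x) y = inner ℂ x (J y) := by
    intro x y
    conv_lhs => rw [← ContinuousLinearMap.isSelfAdjoint_iff'.mp hJ.1]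
    exact ContinuousLinearMap.adjoint_inner_left J y x
  -- hermitian symmetry of kre J
  have hherm : ∀ u v : H, kre J u v = (starRingEnd ℂ) (kre J v u) := by
    intro u v
    simp only [kre]
    rw [inner_conj_symm, hJsa]
  -- nondegeneracy of kre J
  have hnd : ∀ z : H, (∀ y : H, kre J z y = 0) → z = 0 := by
    intro z hz
    have h1 : inner ℂ (J z) (J z) = 0 := hz (J z)
    have h2 : J z = 0 := inner_self_eq_zero.mp h1
    have h3 : J (J z) = z := DFunLike.congr_fun hJ.2 z
    rw [h2, map_zero] at h3
    exact h3.symm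
  -- Pp x + Pm x = x
  have hsum : ∀ x : L2, Pp x + Pm x = x := by
    intro x
    apply lp.ext
    funext i
    have h2 : ((Pp x + Pm x : L2) : ∀ i, ℂ) i = Pp x i + Pm x i := by
      rw [lp.coeFn_add]; rfl
    rw [h2, hPp, hPm]
    split <;> simp
  -- Q acts as identity on range (T ∘ Pp), kills range (T ∘ Pm)
  have hQfix : ∀ x : L2, Q (T (Pp x)) = T (Pp x) := by
    intro x
    have hmem : T (Pp x) ∈ LinearMap.range (Q : H →ₗ[ℂ] H) := by
      rw [hQran]; exact ⟨x, rfl⟩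
    obtain ⟨w, hw⟩ := hmem
    have := DFunLike.congr_fun hQidem w
    simp only [ContinuousLinearMap.comp_apply] at this
    rw [← hw]; exact this
  have hQkill : ∀ x : L2, Q (T (Pm x)) = 0 := by
    intro x
    have hmem : T (Pm x) ∈ LinearMap.ker (Q : H →ₗ[ℂ] H) := by
      rw [hQker]; exact ⟨x, rfl⟩
    exact hmem
  -- Q T = T Pp
  have hQT : ∀ x : L2, Q (T x) = T (Pp x) := by
    intro x
    conv_lhs => rw [← hsum x]
    rw [map_add, map_add, hQfix, hQkill, add_zero]
  -- S = T ∘ Tp is J-selfadjoint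
  have hSsa : ∀ a b : H, kre J (T (Tp a)) b = kre J a (T (Tp b)) := by
    intro a b
    rw [hTp (Tp a) b]
    rw [hherm a (T (Tp b)), hTp (Tp b) a]
    simp only [kre]
    rw [inner_conj_symm, hJ2sa]
  -- Sinv is J-selfadjoint
  have hS1' : ∀ y : H, T (Tp (Sinv y)) = y := fun y => DFunLike.congr_fun hS1 y
  have hS2' : ∀ y : H, Sinv (T (Tp y)) = y := fun y => DFunLike.congr_fun hS2 y
  have hSinvsa : ∀ a b : H, kre J (Sinv a) b = kre J a (Sinv b) := by
    intro a b
    calc kre J (Sinv a) b = kre J (Sinv a) (T (Tp (Sinv b))) := by rw [hS1' b]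
      _ = kre J (T (Tp (Sinv a))) (Sinv b) := (hSsa (Sinv a) (Sinv b)).symm
      _ = kre J a (Sinv b) := by rw [hS1' a]
  -- the basic computation: for all x, y
  have hkey : ∀ (x : L2) (y : H),
      kre J (V x - Sinv (T x)) y = inner ℂ (J2 x) (Vp y - Tp (Sinv y)) := by
    intro x y
    have e1 : kre J (V x) y = inner ℂ (J2 x) (Vp y) := hVp x y
    have e2 : kre J (Sinv (T x)) y = inner ℂ (J2 x) (Tp (Sinv y)) := by
      rw [hSinvsa (T x) y]
      exact hTp x (Sinv y)
    simp only [kre] at e1 e2 ⊢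
    rw [map_sub, inner_sub_left, inner_sub_right, e1, e2]
  haveI : CompleteSpace (LinearMap.ker (T : L2 →ₗ[ℂ] H) : Submodule ℂ L2) :=
    (ContinuousLinearMap.isClosed_ker T).completeSpace_coe
  constructor
  · rintro ⟨h1, h2⟩
    have hTVp : ∀ y : H, T (Vp y) = y := by
      intro y
      have e1 : T (Pp (Vp y)) = Q y := DFunLike.congr_fun h1 y
      have e2 : T (Pm (Vp y)) = y - Q y := DFunLike.congr_fun h2 y
      have : Vp y = Pp (Vp y) + Pm (Vp y) := (hsum (Vp y)).symm
      rw [this, map_add, e1, e2]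
      abel
    refine ⟨V - Sinv.comp T, by abel, ?_⟩
    intro x hx
    have hx' : ∀ s ∈ LinearMap.ker (T : L2 →ₗ[ℂ] H), kre J2 x s = 0 := hx
    show (V - Sinv.comp T) x = 0
    have happ : (V - Sinv.comp T) x = V x - Sinv (T x) := rfl
    rw [happ]
    apply hnd
    intro y
    rw [hkey x y]
    have hdker : Vp y - Tp (Sinv y) ∈ LinearMap.ker (T : L2 →ₗ[ℂ] H) := by
      simp only [LinearMap.mem_ker, ContinuousLinearMap.coe_coe, map_sub, hTVp y, hS1' y,
        sub_self]
    exact hx' _ hdker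
  · rintro ⟨W, hVW, hker⟩
    have hWx : ∀ x : L2, V x - Sinv (T x) = W x := by
      intro x
      rw [hVW]; simp [ContinuousLinearMap.add_apply]
    -- the defect d y lies in ker T
    have hdker : ∀ y : H, Vp y - Tp (Sinv y) ∈ LinearMap.ker (T : L2 →ₗ[ℂ] H) := by
      intro y
      have hmem : Vp y - Tp (Sinv y) ∈ ((LinearMap.ker (T : L2 →ₗ[ℂ] H) : Submodule ℂ L2)ᗮ)ᗮ := by
        rw [Submodule.mem_orthogonal]
        intro u hu
        have hxC : J2 u ∈ JorthCompanion J2 (LinearMap.ker (T : L2 →ₗ[ℂ] H)) := by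
          intro s hs
          show inner ℂ (J2 (J2 u)) s = 0
          rw [hJ2inv u]
          have := hu s hs
          rw [← inner_conj_symm, this, map_zero]
        have hW0 : W (J2 u) = 0 := hker hxC
        have := hkey (J2 u) y
        rw [hWx (J2 u), hW0] at this
        simp only [kre, map_zero, inner_zero_left] at this
        rw [hJ2inv u] at this
        exact this.symm
      rwa [Submodule.orthogonal_orthogonal] at hmem
    have hTd : ∀ y : H, T (Vp y) - T (Tp (Sinv y)) = 0 := by
      intro y
      have := hdker y
      simp only [LinearMap.mem_ker, ContinuousLinearMap.coe_coe, map_sub] at this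
      exact this
    -- split: T Pp d = 0
    have hTPpd : ∀ y : H, T (Pp (Vp y - Tp (Sinv y))) = 0 := by
      intro y
      have h0 : T (Pp (Vp y - Tp (Sinv y))) + T (Pm (Vp y - Tp (Sinv y))) = 0 := by
        rw [← map_add, hsum]
        exact hdker y
      have hq := congrArg Q h0
      rw [map_add, hQfix, hQkill, add_zero, map_zero] at hq
      exact hq
    have hTPmd : ∀ y : H, T (Pm (Vp y - Tp (Sinv y))) = 0 := by
      intro y
      have h0 : T (Pp (Vp y - Tp (Sinv y))) + T (Pm (Vp y - Tp (Sinv y))) = 0 := by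
        rw [← map_add, hsum]
        exact hdker y
      rw [hTPpd y, zero_add] at h0
      exact h0
    constructor
    · ext y
      show T (Pp (Vp y)) = Q y
      have hd := hTPpd y
      rw [map_sub, map_sub] at hd
      have : T (Pp (Vp y)) = T (Pp (Tp (Sinv y))) := by
        have := sub_eq_zero.mp hd
        exact this
      rw [this, ← hQT, hS1' y]
    · ext y
      show T (Pm (Vp y)) = y - Q y
      have hd := hTPmd y
      rw [map_sub, map_sub] at hd
      have h1 : T (Pm (Vp y)) = T (Pm (Tp (Sinv y))) := sub_eq_zero.mp hd
      have h2 : T (Pp (Tp (Sinv y))) + T (Pm (Tp (Sinv y))) = T (Tp (Sinv y)) := by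
        rw [← map_add, hsum]
      rw [h1]
      have h3 : T (Pp (Tp (Sinv y))) = Q y := by rw [← hQT, hS1' y]
      rw [hS1' y, h3] at h2
      exact eq_sub_of_add_eq' h2
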